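/- For every positive integer v and every δ ∈ (0,1], there exists a nonnegative integer k < v such that 4^k·k! / (δ^k·(v−k)^k) ≤ e²·a^{δv}, where a = e^{−1/(2e+1)}. -/

import Mathlib

open Real

private lemma fact_le_stirling (k : ℕ) (hk : 1 ≤ k) :
    (Nat.factorial k : ℝ) ≤ exp 1 * Real.sqrt k * ((k : ℝ)/exp 1)^k := by
  have h1 : Real.log (Stirling.stirlingSeq k) ≤ Real.log (Stirling.stirlingSeq 1) := by
    have := Stirling.log_stirlingSeq'_antitone (Nat.zero_le (k-1))
    simpa [Function.comp, Nat.succ_eq_add_one, Nat.sub_add_cancel hk] using this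
  have hpos : 0 < Stirling.stirlingSeq k := by
    obtain ⟨m, rfl⟩ := Nat.exists_eq_add_of_le hk
    simpa [Nat.add_comm] using Stirling.stirlingSeq'_pos m
  have h2 : Stirling.stirlingSeq k ≤ Stirling.stirlingSeq 1 := by
    have := Stirling.stirlingSeq'_pos 0
    exact (Real.log_le_log_iff hpos (by simpa using this)).mp h1
  rw [Stirling.stirlingSeq_one] at h2
  have hk0 : (0:ℝ) < (k:ℝ) := by exact_mod_cast hk
  have hd : 0 < Real.sqrt (2*k) * ((k:ℝ)/exp 1)^k := by positivity
  have := (div_le_iff₀ hd).mp (by simpa [Stirling.stirlingSeq] using h2)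
  calc (Nat.factorial k : ℝ) ≤ exp 1 / √2 * (Real.sqrt (2*k) * ((k:ℝ)/exp 1)^k) := this
    _ = exp 1 * Real.sqrt k * ((k : ℝ)/exp 1)^k := by
        rw [Real.sqrt_mul (by norm_num : (0:ℝ) ≤ 2)]
        rw [div_mul_eq_mul_div, ← mul_assoc]
        field_simp


private lemma final_exp_ineq (L t x B : ℝ)
    (hL_lb : 0.6931471803 < L) (hL_ub : L < 0.6931471808)
    (hB_ub : B < 0.845) (hB_lb : (0.84:ℝ) < B)
    (ht2 : 2 < t) (hx1 : (1:ℝ) ≤ x) (hxlb : t - 1 - B < x) :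
    1 + Real.log x / 2 + -L + x * (L - 2) ≤ 2 - t := by
  have hx0 : (0:ℝ) < x := by linarith
  have hlx : Real.log x ≤ x - 1 := Real.log_le_sub_one_of_pos hx0
  by_cases ht3 : t ≤ 3
  · nlinarith [mul_nonneg (by linarith : (0:ℝ) ≤ x - 1)
      (by linarith : (0:ℝ) ≤ 3/2 - L), hlx]
  · push_neg at ht3
    set s := t - 1 - B with hs
    have hs1 : 1 < s := by rw [hs]; linarith
    have hs0 : (0:ℝ) < s := by linarith
    have hxs : s < x := hxlb
    set u := Real.sqrt s with hu
    have husq : u ^ 2 = s := Real.sq_sqrt hs0.le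
    have hu0 : (0:ℝ) ≤ u := Real.sqrt_nonneg s
    have hu1 : (1:ℝ) ≤ u := by nlinarith
    have hlogs : Real.log s ≤ 2*u - 2 := by
      have h1 : Real.log s = 2 * Real.log u := by
        rw [hu, Real.log_sqrt hs0.le]; ring
      have h2 : Real.log u ≤ u - 1 := Real.log_le_sub_one_of_pos (by linarith)
      linarith
    have hc : (1:ℝ) ≤ 4*(1-L)*(1+L-B) := by
      nlinarith [mul_nonneg (by linarith : (0:ℝ) ≤ L - 0.6931471803)
        (by linarith : (0:ℝ) ≤ 0.6931471808 - L),
        mul_nonneg (by linarith : (0:ℝ) ≤ 0.845 - B)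
        (by linarith : (0:ℝ) ≤ 1 - L)]
    have hquad : 2*u - 2 ≤ 2*(1-L)*s + 2*L - 2*B := by
      rw [← husq]
      nlinarith [sq_nonneg (2*(1-L)*u - 1), hc,
        (by linarith : (0:ℝ) < 1 - L)]
    have hlogx2 : Real.log x ≤ Real.log s + (x - s) := by
      have h := Real.log_le_sub_one_of_pos (show (0:ℝ) < x/s by positivity)
      rw [Real.log_div (ne_of_gt hx0) (ne_of_gt hs0)] at h
      have hd2 : x/s ≤ x - s + 1 := by
        rw [div_le_iff₀ hs0]; nlinarith
      linarith
    nlinarith [mul_nonneg (by linarith : (0:ℝ) ≤ x - s)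
      (by linarith : (0:ℝ) ≤ 3/2 - L), hlogx2, hlogs, hquad]

/-- For every positive integer `v` and `δ ∈ (0,1]`, there is a nonnegative integer `k < v`
with `4^k·k!/(δ^k(v-k)^k) ≤ e²·a^{δv}` where `a = e^{-1/(2e+1)}`. -/
theorem exists_k_bound (v : ℕ) (hv : 1 ≤ v) (δ : ℝ) (hδ : δ ∈ Set.Ioc (0 : ℝ) 1) :
    ∃ k : ℕ, k < v ∧
      (4 : ℝ) ^ k * (Nat.factorial k : ℝ) / (δ ^ k * ((v : ℝ) - (k : ℝ)) ^ k) ≤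
        Real.exp 2 * Real.exp (-1 / (2 * Real.exp 1 + 1)) ^ (δ * (v : ℝ)) := by
  obtain ⟨hδ0, hδ1⟩ := hδ
  set E := Real.exp 1 with hE
  have hE_lb : 2.7182818283 < E := Real.exp_one_gt_d9
  have hE_ub : E < 2.7182818286 := Real.exp_one_lt_d9
  have hE_pos : (0:ℝ) < E := by linarith
  have h2E1 : (0:ℝ) < 2*E+1 := by linarith
  have hL_lb : 0.6931471803 < Real.log 2 := Real.log_two_gt_d9
  have hL_ub : Real.log 2 < 0.6931471808 := Real.log_two_lt_d9
  set L := Real.log 2 with hLdef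
  set t := δ * v / (2*E+1) with ht
  have hRHS : Real.exp 2 * Real.exp (-1/(2*E+1)) ^ (δ * (v:ℝ)) = Real.exp (2 - t) := by
    rw [← Real.exp_mul, ← Real.exp_add]
    congr 1
    rw [ht]
    ring
  rw [hRHS]
  have hv0 : (0:ℝ) < (v:ℝ) := by exact_mod_cast hv
  by_cases hcase : δ * v ≤ 4*E + 2
  · refine ⟨0, hv, ?_⟩
    simp only [pow_zero, Nat.factorial_zero, Nat.cast_one, one_mul, mul_one, div_one]
    have ht2 : t ≤ 2 := by
      rw [ht, div_le_iff₀ h2E1]; linarith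
    exact Real.one_le_exp (by linarith)
  · push_neg at hcase
    have ht2 : 2 < t := by
      rw [ht, lt_div_iff₀ h2E1]; linarith
    set y := (δ * v - 2*E)/(2*E+δ) with hy
    have hden : (0:ℝ) < 2*E+δ := by linarith
    have hy1 : (1:ℝ) ≤ y := by
      rw [hy, le_div_iff₀ hden]; linarith
    set k := ⌊y⌋₊ with hkdef
    have hkley : (k:ℝ) ≤ y := Nat.floor_le (by linarith)
    have hylt : y < (k:ℝ) + 1 := Nat.lt_floor_add_one y
    have hk1 : 1 ≤ k := Nat.le_floor (by exact_mod_cast hy1)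
    have hkey : 2*E*((k:ℝ)+1) ≤ δ*((v:ℝ) - (k:ℝ)) := by
      have h := (le_div_iff₀ hden).mp hkley
      nlinarith
    have hvx : (0:ℝ) < (v:ℝ) - (k:ℝ) := by
      have h0 : 0 < δ * ((v:ℝ) - (k:ℝ)) := by
        have : (0:ℝ) < 2*E*((k:ℝ)+1) := by positivity
        linarith
      rcases mul_pos_iff.mp h0 with ⟨_, h⟩ | ⟨h, _⟩
      · exact h
      · linarith
    have hkv : k < v := by exact_mod_cast (by linarith : (k:ℝ) < (v:ℝ))
    refine ⟨k, hkv, ?_⟩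
    set x := (k:ℝ) with hx
    have hx1 : (1:ℝ) ≤ x := by rw [hx]; exact_mod_cast hk1
    have hx0 : (0:ℝ) < x := by linarith
    -- lower bound on x
    have hB_ub : 2*E/(2*E+1) < 0.845 := by
      rw [div_lt_iff₀ h2E1]; linarith
    have hB_lb : (0.84:ℝ) < 2*E/(2*E+1) := by
      rw [lt_div_iff₀ h2E1]; linarith
    set B := 2*E/(2*E+1) with hBdef
    have hxlb : t - 1 - B < x := by
      have h1 : t - B ≤ y := by
        have e1 : t - B = (δ*v - 2*E)/(2*E+1) := by
          rw [ht, hBdef]; ring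
        have e2 : (δ*v - 2*E)/(2*E+1) ≤ (δ*v - 2*E)/(2*E+δ) := by
          apply div_le_div_of_nonneg_left (by linarith) hden (by linarith)
        rw [e1, hy]; exact e2
      linarith
    -- Stirling bound
    have hfact : (Nat.factorial k : ℝ) ≤ E * Real.sqrt x * (x/E)^k :=
      fact_le_stirling k hk1
    -- Bernoulli
    have h1x : (0:ℝ) ≤ 1/x := by positivity
    have hbern : 2 * x^k ≤ (x+1)^k := by
      have h := one_add_mul_le_pow (by linarith : (-2:ℝ) ≤ 1/x) k
      have h2 : (2:ℝ) ≤ (1+1/x)^k := by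
        have hk' : (k:ℝ) * (1/x) = 1 := by
          rw [hx]; field_simp
        linarith [h]
      calc 2 * x^k ≤ (1+1/x)^k * x^k :=
            mul_le_mul_of_nonneg_right h2 (by positivity)
        _ = (x+1)^k := by
            rw [← mul_pow]; congr 1; field_simp
    have hP : (0:ℝ) < (2*E*(x+1))^k := by positivity
    have hsqx : (0:ℝ) < Real.sqrt x := Real.sqrt_pos.mpr hx0
    have hnum : (4:ℝ)^k * (Nat.factorial k : ℝ) ≤
        E*Real.sqrt x/2 * (2/E^2)^k * (2*E*(x+1))^k := by
      have e1 : E*Real.sqrt x/2 * (2/E^2)^k * (2*E*(x+1))^k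
          = E*Real.sqrt x/2 * (4*(x+1)/E)^k := by
        rw [mul_assoc, ← mul_pow]
        congr 2
        field_simp
        ring
      rw [e1]
      calc (4:ℝ)^k * (Nat.factorial k : ℝ)
          ≤ 4^k * (E * Real.sqrt x * (x/E)^k) :=
            mul_le_mul_of_nonneg_left hfact (by positivity)
        _ = E*Real.sqrt x/2 * (2 * (4*x/E)^k) := by
            field_simp
            ring
        _ ≤ E*Real.sqrt x/2 * ((4*(x+1))/E)^k := by
            refine mul_le_mul_of_nonneg_left ?_ (by positivity)
            calc 2*(4*x/E)^k = 2*x^k*(4/E)^k := by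
                  field_simp; ring
              _ ≤ (x+1)^k*(4/E)^k :=
                  mul_le_mul_of_nonneg_right hbern (by positivity)
              _ = (4*(x+1)/E)^k := by
                  rw [(by ring : 4*(x+1)/E = (x+1)*(4/E)), mul_pow]
    have hstep1 : (4:ℝ)^k * (Nat.factorial k : ℝ) / (δ^k * ((v:ℝ) - x)^k)
        ≤ E*Real.sqrt x/2 * (2/E^2)^k := by
      calc (4:ℝ)^k * (Nat.factorial k : ℝ) / (δ^k * ((v:ℝ) - x)^k)
          = (4:ℝ)^k * (Nat.factorial k : ℝ) / (δ * ((v:ℝ) - x))^k := by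
            rw [mul_pow]
        _ ≤ (E*Real.sqrt x/2 * (2/E^2)^k * (2*E*(x+1))^k) / (2*E*(x+1))^k := by
            apply div_le_div₀ (by positivity) hnum hP
            exact pow_le_pow_left₀ (by positivity) hkey k
        _ = E*Real.sqrt x/2 * (2/E^2)^k := by
            rw [mul_div_assoc, div_self (ne_of_gt hP), mul_one]
    refine hstep1.trans ?_
    -- rewrite LHS as an exponential
    have hE2 : E^2 = Real.exp 2 := by
      rw [hE, sq, ← Real.exp_add]; norm_num
    have hsqrt_exp : Real.sqrt x = Real.exp (Real.log x / 2) := by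
      rw [Real.sqrt_eq_rpow, Real.rpow_def_of_pos hx0]; ring_nf
    have h2exp : Real.exp L = 2 := Real.exp_log (by norm_num)
    have hfac : (2/E^2 : ℝ)^k = Real.exp (x * (L - 2)) := by
      have h : (2/E^2 : ℝ) = Real.exp (L - 2) := by
        rw [Real.exp_sub, h2exp, hE2]
      rw [h, ← Real.exp_nat_mul, ← hx]
    have hLHS : E*Real.sqrt x/2 * (2/E^2)^k
        = Real.exp (1 + Real.log x / 2 + -L + x * (L - 2)) := by
      rw [Real.exp_add, Real.exp_add, Real.exp_add, Real.exp_neg, h2exp,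
        hfac, hsqrt_exp, hE]
      ring
    rw [hLHS, Real.exp_le_exp]
    exact final_exp_ineq L t x B hL_lb hL_ub hB_ub hB_lb ht2 hx1 hxlb
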